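/- Complete graphs are determined by the Smith normal form of the distance Laplacian matrix: if G is a connected graph on n vertices whose distance Laplacian matrix D^L(G) is equivalent over ℤ to the distance Laplacian matrix D^L(K_n) of the complete graph K_n, then G is isomorphic to K_n. -/

import Mathlib

open Matrix MvPolynomial

variable {V : Type*}

/-- The distance matrix of a graph: the `(u,v)` entry is the graph distance `d_G(u,v)`. -/
noncomputable def distMatrix [Fintype V] (G : SimpleGraph V) : Matrix V V ℤ :=
  fun u v => (G.dist u v : ℤ)

/-- The transmission of a vertex: the sum of the distances to all vertices. -/
noncomputable def transmission [Fintype V] (G : SimpleGraph V) (u : V) : ℤ :=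
  ∑ v, (G.dist u v : ℤ)

/-- The distance Laplacian matrix `D^L(G) = diag(tr) - D(G)`. -/
noncomputable def distLaplacian [Fintype V] [DecidableEq V] (G : SimpleGraph V) : Matrix V V ℤ :=
  Matrix.diagonal (transmission G) - distMatrix G

/-- The signless distance Laplacian matrix `D^Q(G) = diag(tr) + D(G)`. -/
noncomputable def signlessDistLaplacian [Fintype V] [DecidableEq V] (G : SimpleGraph V) : Matrix V V ℤ :=
  Matrix.diagonal (transmission G) + distMatrix G

/-- Two integer matrices are equivalent over `ℤ` if `M = U * N * W` with `U`, `W`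
invertible over `ℤ` (unimodular). -/
def MatEquivZ [Fintype V] [DecidableEq V] (M N : Matrix V V ℤ) : Prop :=
  ∃ U W : Matrix V V ℤ, IsUnit U.det ∧ IsUnit W.det ∧ M = U * N * W

/-- `f` lists the diagonal entries of the Smith normal form of `M`:
the diagonal matrix `diagonal f` is equivalent to `M` over `ℤ`, consecutive entries
divide each other, and the entries are nonnegative (normalization over `ℤ`). -/
def IsSNF {N : ℕ} (M : Matrix (Fin N) (Fin N) ℤ) (f : Fin N → ℤ) : Prop :=
  MatEquivZ M (Matrix.diagonal f) ∧ (∀ i j : Fin N, i ≤ j → f i ∣ f j) ∧ ∀ i, 0 ≤ f i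

/-- The ideal generated by the determinants of all `k × k` submatrices of `M`. -/
def minorsIdeal {R : Type*} [CommRing R] [Fintype V] (M : Matrix V V R) (k : ℕ) : Ideal R :=
  Ideal.span (Set.range fun p : (Fin k → V) × (Fin k → V) => (M.submatrix p.1 p.2).det)

/-- The generalized distance matrix `D(G, X_G) = diag(X_G) + D(G)` over `ℤ[X_G]`. -/
noncomputable def genDistMatrix [Fintype V] [DecidableEq V] (G : SimpleGraph V) :
    Matrix V V (MvPolynomial V ℤ) :=
  Matrix.diagonal (fun u => MvPolynomial.X u) +
    (distMatrix G).map (fun a => (a : MvPolynomial V ℤ))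

/-- The `k`-th distance ideal `I_k(G, X_G)`: the ideal of `ℤ[X_G]` generated by the
determinants of all `k × k` submatrices of the generalized distance matrix. -/
noncomputable def distIdeal [Fintype V] [DecidableEq V] (G : SimpleGraph V) (k : ℕ) :
    Ideal (MvPolynomial V ℤ) :=
  minorsIdeal (genDistMatrix G) k

section Aux

variable {G : SimpleGraph V}


lemma myDist_getVert_le (hG : G.Connected) {u v : V} (p : G.Walk u v) :
    ∀ k, G.dist u (p.getVert k) ≤ k := by
  induction p with
  | nil => intro k; simp [SimpleGraph.Walk.getVert, SimpleGraph.dist_self]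
  | @cons a b c h q ih =>
    intro k
    cases k with
    | zero => simp [SimpleGraph.Walk.getVert_zero, SimpleGraph.dist_self]
    | succ k =>
      rw [SimpleGraph.Walk.getVert_cons_succ]
      have h1 := hG.dist_triangle (u := a) (v := b) (w := q.getVert k)
      have h2 : G.dist a b ≤ 1 := by simpa using SimpleGraph.dist_le h.toWalk
      have := ih k
      omega

lemma myDist_getVert_right {u v : V} (p : G.Walk u v) :
    ∀ k, G.dist (p.getVert k) v ≤ p.length - k := by
  induction p with
  | nil => intro k; simp [SimpleGraph.Walk.getVert, SimpleGraph.dist_self]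
  | @cons a b c h q ih =>
    intro k
    cases k with
    | zero =>
      simpa [SimpleGraph.Walk.getVert_zero] using SimpleGraph.dist_le (SimpleGraph.Walk.cons h q)
    | succ k =>
      rw [SimpleGraph.Walk.getVert_cons_succ]
      simpa using ih k

lemma myDist_getVert_eq (hG : G.Connected) {u v : V} (p : G.Walk u v)
    (hp : p.length = G.dist u v) {k : ℕ} (hk : k ≤ p.length) :
    G.dist u (p.getVert k) = k := by
  have h1 := myDist_getVert_le hG p k
  have h2 := myDist_getVert_right p k
  have h3 := hG.dist_triangle (u := u) (v := p.getVert k) (w := v)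
  omega

lemma myDist_lt_card [Fintype V] [DecidableEq V] (hG : G.Connected) (u v : V) :
    G.dist u v < Fintype.card V := by
  obtain ⟨p, hp⟩ := hG.exists_walk_length_eq_dist u v
  calc G.dist u v ≤ p.bypass.length := SimpleGraph.dist_le _
    _ < Fintype.card V := p.bypass_isPath.length_lt

lemma myInt_cases {N t : ℤ} (nz : 0 < N) (h : N ∣ t) (h1 : -N < t) (h2 : t < 2 * N) :
    t = 0 ∨ t = N := by
  obtain ⟨k, rfl⟩ := h
  have hk0 : 0 ≤ k := by
    by_contra hc
    push_neg at hc
    have hk : k ≤ -1 := by omega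
    nlinarith
  have hk1 : k ≤ 1 := by
    by_contra hc
    push_neg at hc
    have hk : 2 ≤ k := by omega
    nlinarith
  interval_cases k
  · left; ring
  · right; ring

end Aux

/-- Complete graphs are determined by the SNF of the distance Laplacian
matrix: if `G` is a connected graph on `n` vertices whose distance Laplacian matrix is
equivalent over `ℤ` to that of the complete graph `K_n`, then `G` is isomorphic to
`K_n`. -/
theorem completeGraph_determined_by_snf_distLaplacian (n : ℕ) (G : SimpleGraph (Fin n))
    (hG : G.Connected)
    (h : MatEquivZ (distLaplacian G) (distLaplacian (⊤ : SimpleGraph (Fin n)))) :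
    Nonempty (G ≃g (⊤ : SimpleGraph (Fin n))) := by
  by_cases hcomp : ∀ a b : Fin n, a ≠ b → G.Adj a b
  · have hGtop : G = ⊤ := by
      ext a b
      simp only [SimpleGraph.top_adj]
      exact ⟨fun hab => hab.ne, hcomp a b⟩
    subst hGtop
    exact ⟨RelIso.refl _⟩
  exfalso
  push_neg at hcomp
  obtain ⟨u, b, hab, hnadj⟩ := hcomp
  -- u, w, v with dist u v = 2, w adjacent to both
  have hdab : 2 ≤ G.dist u b := by
    have h0 := hG.pos_dist_of_ne hab
    have h1 : G.dist u b ≠ 1 := fun hh => hnadj (SimpleGraph.dist_eq_one_iff_adj.mp hh)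
    omega
  obtain ⟨p, hp⟩ := hG.exists_walk_length_eq_dist u b
  have hplen : 2 ≤ p.length := by omega
  set w : Fin n := p.getVert 1 with hw
  set v : Fin n := p.getVert 2 with hv
  have hadjuw : G.Adj u w := by
    have := p.adj_getVert_succ (i := 0) (by omega)
    simpa [p.getVert_zero] using this
  have hadjwv : G.Adj w v := p.adj_getVert_succ (i := 1) (by omega)
  have hdistuv : G.dist u v = 2 := myDist_getVert_eq hG p hp (by omega)
  have hdistuw : G.dist u w = 1 := SimpleGraph.dist_eq_one_iff_adj.mpr hadjuw
  have hdistwv : G.dist w v = 1 := SimpleGraph.dist_eq_one_iff_adj.mpr hadjwv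
  have huw : u ≠ w := hadjuw.ne
  have hwv : w ≠ v := hadjwv.ne
  have huv : u ≠ v := by
    intro e
    rw [← e, SimpleGraph.dist_self] at hdistuv
    exact absurd hdistuv (by omega)
  have hn3 : 3 ≤ n := by
    have hcard : ({u, w, v} : Finset (Fin n)).card = 3 := by
      rw [Finset.card_insert_of_notMem (by simp [huw, huv]),
        Finset.card_insert_of_notMem (by simp [hwv]), Finset.card_singleton]
    calc 3 = ({u, w, v} : Finset (Fin n)).card := hcard.symm
      _ ≤ (Finset.univ : Finset (Fin n)).card := Finset.card_le_univ _
      _ = n := by simp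
  -- matrix computations
  obtain ⟨Um, Wm, _, _, hM⟩ := h
  have hE : ∀ c d : Fin n,
      distLaplacian (⊤ : SimpleGraph (Fin n)) c d = (n : ℤ) * (if c = d then 1 else 0) - 1 := by
    have htopdist : ∀ x y : Fin n, ((⊤ : SimpleGraph (Fin n)).dist x y : ℤ) =
        if x = y then 0 else 1 := by
      intro x y
      by_cases hxy : x = y
      · simp [hxy, SimpleGraph.dist_self]
      · have : (⊤ : SimpleGraph (Fin n)).dist x y = 1 :=
          SimpleGraph.dist_eq_one_iff_adj.mpr (by simp [hxy])
        simp [hxy, this]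
    have htr : ∀ x : Fin n, transmission (⊤ : SimpleGraph (Fin n)) x = (n : ℤ) - 1 := by
      intro x
      unfold transmission
      rw [Finset.sum_congr rfl fun y _ => htopdist x y]
      have h2 : ∀ y : Fin n, (if x = y then (0 : ℤ) else 1) = 1 - (if x = y then 1 else 0) := by
        intro y; split <;> ring
      rw [Finset.sum_congr rfl fun y _ => h2 y, Finset.sum_sub_distrib, Finset.sum_const,
        Finset.sum_ite_eq, if_pos (Finset.mem_univ x)]
      simp
    intro c d
    unfold distLaplacian
    rw [Matrix.sub_apply]
    unfold distMatrix
    rw [Matrix.diagonal_apply, htopdist c d]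
    by_cases hcd : c = d
    · rw [if_pos hcd, if_pos hcd, if_pos hcd, htr c]; ring
    · rw [if_neg hcd, if_neg hcd, if_neg hcd]; ring
  set x : Fin n → ℤ := fun i => ∑ c, Um i c with hx
  set y : Fin n → ℤ := fun j => ∑ d, Wm d j with hy
  have hkey : ∀ i j : Fin n,
      distLaplacian G i j = (n : ℤ) * (Um * Wm) i j - x i * y j := by
    intro i j
    rw [hM]
    have hUE : ∀ d : Fin n, (Um * distLaplacian (⊤ : SimpleGraph (Fin n))) i d =
        (n : ℤ) * Um i d - x i := by
      intro d
      rw [Matrix.mul_apply]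
      have hterm : ∀ c : Fin n, Um i c * distLaplacian (⊤ : SimpleGraph (Fin n)) c d =
          (n : ℤ) * (if c = d then Um i c else 0) - Um i c := by
        intro c; rw [hE c d]; split <;> ring
      rw [Finset.sum_congr rfl fun c _ => hterm c, Finset.sum_sub_distrib, ← Finset.mul_sum,
        Finset.sum_ite_eq', if_pos (Finset.mem_univ d)]
    rw [Matrix.mul_apply, Finset.sum_congr rfl fun d _ => by rw [hUE d]]
    have : ∀ d : Fin n, ((n : ℤ) * Um i d - x i) * Wm d j =
        (n : ℤ) * (Um i d * Wm d j) - x i * Wm d j := by intro d; ring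
    rw [Finset.sum_congr rfl fun d _ => this d, Finset.sum_sub_distrib, ← Finset.mul_sum,
      ← Finset.mul_sum, Matrix.mul_apply]
  have hdvd : ∀ i j k l : Fin n, (n : ℤ) ∣
      (distLaplacian G i k * distLaplacian G j l - distLaplacian G i l * distLaplacian G j k) := by
    intro i j k l
    refine ⟨(n : ℤ) * ((Um * Wm) i k * (Um * Wm) j l - (Um * Wm) i l * (Um * Wm) j k)
      - (Um * Wm) i k * (x j * y l) - (x i * y k) * (Um * Wm) j l
      + (Um * Wm) i l * (x j * y k) + (x i * y l) * (Um * Wm) j k, ?_⟩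
    rw [hkey i k, hkey j l, hkey i l, hkey j k]
    ring
  have hoff : ∀ i j : Fin n, i ≠ j → distLaplacian G i j = -(G.dist i j : ℤ) := by
    intro i j hij
    unfold distLaplacian
    rw [Matrix.sub_apply]
    unfold distMatrix
    rw [Matrix.diagonal_apply_ne _ hij]
    ring
  have hdiag : ∀ i : Fin n, distLaplacian G i i = transmission G i := by
    intro i
    unfold distLaplacian
    rw [Matrix.sub_apply]
    unfold distMatrix
    rw [Matrix.diagonal_apply_eq, SimpleGraph.dist_self]
    simp
  have e1 : distLaplacian G u w = -1 := by rw [hoff u w huw, hdistuw]; norm_num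
  have e2 : distLaplacian G w v = -1 := by rw [hoff w v hwv, hdistwv]; norm_num
  have e3 : distLaplacian G u v = -2 := by rw [hoff u v huv, hdistuv]; norm_num
  -- minor A : n ∣ 1 + 2 * tr w
  have hA : (n : ℤ) ∣ 1 + 2 * transmission G w := by
    have := hdvd u w w v
    rw [e1, e2, e3, hdiag w] at this
    have heq : (-1 : ℤ) * -1 - -2 * transmission G w = 1 + 2 * transmission G w := by ring
    rwa [heq] at this
  -- minor B and the dichotomy
  have hdich : ∀ z : Fin n, z ≠ u → z ≠ w → G.dist w z = 1 ∨ G.dist w z = n - 1 := by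
    intro z hzu hzw
    have hBz : (n : ℤ) ∣ 2 * (G.dist w z : ℤ) - (G.dist u z : ℤ) := by
      have := hdvd u w v z
      rw [e3, e2, hoff w z (Ne.symm hzw), hoff u z (Ne.symm hzu)] at this
      have heq : (-2 : ℤ) * -(G.dist w z : ℤ) - -(G.dist u z : ℤ) * -1 =
          2 * (G.dist w z : ℤ) - (G.dist u z : ℤ) := by ring
      rwa [heq] at this
    have hwzpos : 0 < G.dist w z := hG.pos_dist_of_ne (Ne.symm hzw)
    have huzpos : 0 < G.dist u z := hG.pos_dist_of_ne (Ne.symm hzu)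
    have hwzlt : G.dist w z < n := by
      simpa using myDist_lt_card hG w z
    have huzlt : G.dist u z < n := by
      simpa using myDist_lt_card hG u z
    have tri1 : G.dist u z ≤ 1 + G.dist w z := by
      have := hG.dist_triangle (u := u) (v := w) (w := z)
      omega
    have tri2 : G.dist w z ≤ 1 + G.dist u z := by
      have h1 := hG.dist_triangle (u := w) (v := u) (w := z)
      have h2 : G.dist w u = 1 := by rwa [SimpleGraph.dist_comm] at hdistuw
      omega
    have hcases := myInt_cases (N := (n : ℤ)) (t := 2 * (G.dist w z : ℤ) - (G.dist u z : ℤ))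
      (by exact_mod_cast by omega : (0:ℤ) < n) hBz
      (by push_cast; omega) (by push_cast; omega)
    rcases hcases with hc | hc
    · left
      have : G.dist u z = 2 * G.dist w z := by exact_mod_cast by linarith [hc]
      omega
    · right
      have : 2 * (G.dist w z : ℤ) - (G.dist u z : ℤ) = (n : ℤ) := hc
      have h' : 2 * G.dist w z = G.dist u z + n := by exact_mod_cast by linarith [this]
      omega
  by_cases hall : ∀ z : Fin n, z ≠ u → z ≠ w → G.dist w z = 1
  · -- transmission G w = n - 1, contradiction with hA
    have htrw : transmission G w = (n : ℤ) - 1 := by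
      unfold transmission
      have hsub : ({u, w} : Finset (Fin n)) ⊆ Finset.univ := Finset.subset_univ _
      rw [← Finset.sum_sdiff hsub]
      have hconst : ∀ z ∈ Finset.univ \ ({u, w} : Finset (Fin n)), (G.dist w z : ℤ) = 1 := by
        intro z hz
        simp only [Finset.mem_sdiff, Finset.mem_insert, Finset.mem_singleton] at hz
        push_neg at hz
        rw [hall z hz.2.1 hz.2.2]
        norm_num
      rw [Finset.sum_congr rfl hconst, Finset.sum_const]
      have hcard2 : ({u, w} : Finset (Fin n)).card = 2 := by
        rw [Finset.card_insert_of_notMem (by simp [huw]), Finset.card_singleton]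
      have hcards : (Finset.univ \ ({u, w} : Finset (Fin n))).card = n - 2 := by
        rw [Finset.card_sdiff_of_subset hsub, hcard2]
        simp
      rw [hcards]
      have hsum2 : ∑ z ∈ ({u, w} : Finset (Fin n)), (G.dist w z : ℤ) = 1 := by
        rw [Finset.sum_insert (by simp [huw]), Finset.sum_singleton, SimpleGraph.dist_self,
          SimpleGraph.dist_comm, hdistuw]
        norm_num
      rw [hsum2]
      have : ((n - 2 : ℕ) : ℤ) = (n : ℤ) - 2 := by omega
      rw [nsmul_eq_mul, this]
      ring
    rw [htrw] at hA
    have h1 : (1 : ℤ) + 2 * ((n : ℤ) - 1) = 2 * n - 1 := by ring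
    rw [h1] at hA
    have h2 : (n : ℤ) ∣ 1 := by
      have h3 : (n : ℤ) ∣ (n : ℤ) * 2 - (2 * (n : ℤ) - 1) := Int.dvd_sub (Dvd.intro 2 rfl) hA
      have h4 : (n : ℤ) * 2 - (2 * (n : ℤ) - 1) = 1 := by ring
      rwa [h4] at h3
    have := Int.le_of_dvd one_pos h2
    omega
  · push_neg at hall
    obtain ⟨z₀, hz₀u, hz₀w, hz₀ne⟩ := hall
    have hz₀ : G.dist w z₀ = n - 1 := by
      rcases hdich z₀ hz₀u hz₀w with hc | hc
      · exact absurd hc hz₀ne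
      · exact hc
    -- distance from w is a surjection onto Fin n, hence injective; contradiction with u ≠ v
    have hcard : ∀ z : Fin n, G.dist w z < n := by
      intro z; simpa using myDist_lt_card hG w z
    set F : Fin n → Fin n := fun z => ⟨G.dist w z, hcard z⟩ with hF
    obtain ⟨q, hq⟩ := hG.exists_walk_length_eq_dist w z₀
    have hqlen : q.length = n - 1 := by rw [hq, hz₀]
    have hsurj : Function.Surjective F := by
      intro m
      refine ⟨q.getVert m.val, ?_⟩
      have hmle : m.val ≤ q.length := by
        have := m.isLt
        omega
      have := myDist_getVert_eq hG q hq hmle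
      exact Fin.ext (by simpa [hF] using this)
    have hinj : Function.Injective F := Finite.injective_iff_surjective.mpr hsurj
    have hFu : F u = F v := by
      apply Fin.ext
      simp only [hF]
      rw [SimpleGraph.dist_comm, hdistuw, hdistwv]
    exact huv (hinj hFu)
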